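/- Let α be Verblunsky coefficients and n_j a strictly increasing sequence of positive integers with α_{n_j−1} ≠ 0 for all j, such that: (i) limsup_{n→∞} |α_n|^{1/n} = b ∈ (0,1); (ii) liminf_{j→∞} |α_{n_j}|^{1/n_j} = b; (iii) for every k = 0,1,2,… there is β_k ∈ ℂ with lim_{j→∞} conj(α_{n_j−k−1})/conj(α_{n_j−1}) = β_k; (iv) for every ε > 0 there is C_ε > 0 so that |α_{n_j−k−1}| (b−ε)^k ≤ C_ε |α_{n_j−1}| for all j and all k = 1,2,…. Then for every ε ∈ (0,b) the series Σ_{k=0}^∞ β_k z^k converges absolutely and uniformly on {|z| ≤ b − ε}, and lim_{j→∞} Φ_{n_j}(z)/conj(α_{n_j−1}) = −S(z) Σ_{k=0}^∞ β_k z^k uniformly on {|z| ≤ b − ε}. -/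

import Mathlib

open Polynomial Filter Topology

/-- The monic orthogonal polynomials on the unit circle, defined by the Szegő
recursion `Φ₀ = 1`, `Φ_{n+1}(z) = z Φ_n(z) - conj(α_n) Φ_n^*(z)`, where the reversed
polynomial is `P^*(z) = Σ_{j=0}^n conj(c_{n-j}) z^j`. -/
noncomputable def PhiP (α : ℕ → ℂ) : ℕ → Polynomial ℂ
  | 0 => 1
  | n + 1 => X * PhiP α n -
      Polynomial.C ((starRingEnd ℂ) (α n)) *
        Polynomial.reflect n (Polynomial.map (starRingEnd ℂ) (PhiP α n))

/-- The reversed polynomial `Φ_n^*(z) = z^n conj(Φ_n(1/conj z))`. -/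
noncomputable def PhiStarP (α : ℕ → ℂ) (n : ℕ) : Polynomial ℂ :=
  Polynomial.reflect n (Polynomial.map (starRingEnd ℂ) (PhiP α n))

lemma reflect_reflect' (N : ℕ) (f : Polynomial ℂ) : reflect N (reflect N f) = f := by
  ext i
  rw [coeff_reflect, coeff_reflect, revAt_invol]

lemma natDegree_reflect_le' {f : Polynomial ℂ} {N : ℕ} (h : f.natDegree ≤ N) :
    (reflect N f).natDegree ≤ N := by
  rw [natDegree_le_iff_coeff_eq_zero] at h ⊢
  intro i hi
  rw [coeff_reflect, revAt_eq_self_of_lt hi]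
  exact h i hi

lemma phiP_natDegree_le (α : ℕ → ℂ) : ∀ n, (PhiP α n).natDegree ≤ n := by
  intro n
  induction n with
  | zero => simp [PhiP]
  | succ n ih =>
    rw [PhiP]
    refine (natDegree_sub_le _ _).trans ?_
    simp only [max_le_iff]
    constructor
    · refine (natDegree_mul_le).trans ?_
      have := add_le_add (natDegree_X_le (R := ℂ)) ih
      omega
    · refine (natDegree_mul_le).trans ?_
      simp only [natDegree_C, zero_add]
      exact (natDegree_reflect_le' (natDegree_map_le.trans ih)).trans (Nat.le_succ n)

lemma phiStar_rec (α : ℕ → ℂ) (n : ℕ) :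
    PhiStarP α (n + 1) = PhiStarP α n - C (α n) * (X * PhiP α n) := by
  have hdeg : (PhiP α n).natDegree ≤ n := phiP_natDegree_le α n
  have hdegm : ((PhiP α n).map (starRingEnd ℂ)).natDegree ≤ n :=
    natDegree_map_le.trans hdeg
  have hmapstar : (PhiStarP α n).map (starRingEnd ℂ) = reflect n (PhiP α n) := by
    rw [PhiStarP, ← reflect_map, Polynomial.map_map]
    have : (starRingEnd ℂ).comp (starRingEnd ℂ) = RingHom.id ℂ := by
      ext x; simp
    rw [this, Polynomial.map_id]
  rw [PhiStarP, PhiP]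
  rw [Polynomial.map_sub, Polynomial.map_mul, Polynomial.map_mul, map_C]
  rw [reflect_sub, reflect_C_mul]
  have h1 : reflect (n + 1) (X * (PhiP α n).map (starRingEnd ℂ)) =
      reflect n ((PhiP α n).map (starRingEnd ℂ)) := by
    have := reflect_mul (X : Polynomial ℂ) ((PhiP α n).map (starRingEnd ℂ))
      (natDegree_X_le) hdegm
    rw [add_comm] at this
    rw [this, reflect_one_X]
    ring
  have h2 : reflect (n + 1)
      ((reflect n ((PhiP α n).map (starRingEnd ℂ))).map (starRingEnd ℂ)) =
      X * PhiP α n := by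
    rw [← PhiStarP, hmapstar]
    have key : reflect (n + 1) (X * PhiP α n) = reflect n (PhiP α n) := by
      have := reflect_mul (X : Polynomial ℂ) (PhiP α n) (natDegree_X_le) hdeg
      rw [add_comm] at this
      rw [this, reflect_one_X]; ring
    rw [← key, reflect_reflect']
  rw [Polynomial.map_X, h1, h2, PhiStarP]
  simp [starRingEnd_self_apply]

lemma eval_phi_rec (α : ℕ → ℂ) (n : ℕ) (z : ℂ) :
    (PhiP α (n + 1)).eval z =
      z * (PhiP α n).eval z - (starRingEnd ℂ) (α n) * (PhiStarP α n).eval z := by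
  rw [PhiP]; simp [PhiStarP]

lemma eval_phiStar_rec (α : ℕ → ℂ) (n : ℕ) (z : ℂ) :
    (PhiStarP α (n + 1)).eval z =
      (PhiStarP α n).eval z - α n * (z * (PhiP α n).eval z) := by
  rw [phiStar_rec]; simp

lemma phi_prod_bound (α : ℕ → ℂ) (n : ℕ) (z : ℂ) (hz : ‖z‖ ≤ 1) :
    ‖(PhiP α n).eval z‖ ≤ ∏ k ∈ Finset.range n, (1 + ‖α k‖) ∧
    ‖(PhiStarP α n).eval z‖ ≤ ∏ k ∈ Finset.range n, (1 + ‖α k‖) := by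
  induction n with
  | zero => simp [PhiP, PhiStarP]
  | succ n ih =>
    obtain ⟨h1, h2⟩ := ih
    have hpos : (0:ℝ) ≤ ∏ k ∈ Finset.range n, (1 + ‖α k‖) :=
      Finset.prod_nonneg fun k _ => by positivity
    rw [Finset.prod_range_succ]
    constructor
    · rw [eval_phi_rec]
      refine (norm_sub_le _ _).trans ?_
      rw [norm_mul, norm_mul]
      have e1 : ‖z‖ * ‖(PhiP α n).eval z‖ ≤
          ∏ k ∈ Finset.range n, (1 + ‖α k‖) := by
        calc ‖z‖ * ‖(PhiP α n).eval z‖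
            ≤ 1 * (∏ k ∈ Finset.range n, (1 + ‖α k‖)) :=
              mul_le_mul hz h1 (by positivity) one_pos.le
          _ = _ := one_mul _
      have e2 : ‖(starRingEnd ℂ) (α n)‖ * ‖(PhiStarP α n).eval z‖ ≤
          ‖α n‖ * ∏ k ∈ Finset.range n, (1 + ‖α k‖) := by
        rw [Complex.norm_conj]
        exact mul_le_mul_of_nonneg_left h2 (norm_nonneg _)
      calc ‖z‖ * ‖(PhiP α n).eval z‖ +
              ‖(starRingEnd ℂ) (α n)‖ * ‖(PhiStarP α n).eval z‖
          ≤ (∏ k ∈ Finset.range n, (1 + ‖α k‖)) +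
              ‖α n‖ * ∏ k ∈ Finset.range n, (1 + ‖α k‖) :=
            add_le_add e1 e2
        _ = (∏ k ∈ Finset.range n, (1 + ‖α k‖)) * (1 + ‖α n‖) := by ring
    · rw [eval_phiStar_rec]
      refine (norm_sub_le _ _).trans ?_
      rw [norm_mul, norm_mul]
      have e1 : ‖z‖ * ‖(PhiP α n).eval z‖ ≤
          ∏ k ∈ Finset.range n, (1 + ‖α k‖) := by
        calc ‖z‖ * ‖(PhiP α n).eval z‖
            ≤ 1 * (∏ k ∈ Finset.range n, (1 + ‖α k‖)) :=
              mul_le_mul hz h1 (by positivity) one_pos.le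
          _ = _ := one_mul _
      calc ‖(PhiStarP α n).eval z‖ +
              ‖α n‖ * (‖z‖ * ‖(PhiP α n).eval z‖)
          ≤ (∏ k ∈ Finset.range n, (1 + ‖α k‖)) +
              ‖α n‖ * ∏ k ∈ Finset.range n, (1 + ‖α k‖) :=
            add_le_add h2 (mul_le_mul_of_nonneg_left e1 (norm_nonneg _))
        _ = (∏ k ∈ Finset.range n, (1 + ‖α k‖)) * (1 + ‖α n‖) := by ring

lemma phi_identity (α : ℕ → ℂ) (n : ℕ) (z : ℂ) :
    (PhiP α n).eval z = z ^ n - ∑ m ∈ Finset.range n,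
      (starRingEnd ℂ) (α m) * (z ^ (n - 1 - m) * (PhiStarP α m).eval z) := by
  induction n with
  | zero => simp [PhiP]
  | succ n ih =>
    rw [eval_phi_rec, ih, Finset.sum_range_succ]
    rw [mul_sub]
    have : ∀ m ∈ Finset.range n,
        z * ((starRingEnd ℂ) (α m) * (z ^ (n - 1 - m) * (PhiStarP α m).eval z)) =
        (starRingEnd ℂ) (α m) * (z ^ (n + 1 - 1 - m) * (PhiStarP α m).eval z) := by
      intro m hm
      rw [Finset.mem_range] at hm
      have : n + 1 - 1 - m = (n - 1 - m) + 1 := by omega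
      rw [this, pow_succ]
      ring
    rw [Finset.mul_sum, Finset.sum_congr rfl this]
    have : n + 1 - 1 - n = 0 := by omega
    rw [this]
    ring

lemma geom_partial_bound {q : ℝ} (hq0 : 0 ≤ q) (hq1 : q < 1) (m m' : ℕ) :
    ∑ i ∈ Finset.Ico m m', q ^ i ≤ q ^ m * (1 - q)⁻¹ := by
  rw [Finset.sum_Ico_eq_sum_range]
  have : ∀ i ∈ Finset.range (m' - m), q ^ (m + i) = q ^ m * q ^ i := fun i _ => pow_add q m i
  rw [Finset.sum_congr rfl this, ← Finset.mul_sum]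
  refine mul_le_mul_of_nonneg_left ?_ (pow_nonneg hq0 m)
  have hsum : Summable (fun i : ℕ => q ^ i) := summable_geometric_of_lt_one hq0 hq1
  calc ∑ i ∈ Finset.range (m' - m), q ^ i ≤ ∑' i : ℕ, q ^ i :=
        Summable.sum_le_tsum _ (fun i _ => pow_nonneg hq0 i) hsum
    _ = (1 - q)⁻¹ := tsum_geometric_of_lt_one hq0 hq1

lemma star_diff (α : ℕ → ℂ) (M C q : ℝ) (hq0 : 0 ≤ q) (hq1 : q < 1)
    (hC : ∀ n, ‖α n‖ ≤ C * q ^ n)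
    (hM : ∀ n z, ‖z‖ ≤ 1 → ‖(PhiP α n).eval z‖ ≤ M) :
    ∀ z, ‖z‖ ≤ 1 → ∀ m m', m ≤ m' →
      ‖(PhiStarP α m').eval z - (PhiStarP α m).eval z‖ ≤
        C * M * (1 - q)⁻¹ * q ^ m := by
  have hMpos : 0 ≤ M := le_trans (norm_nonneg _) (hM 0 0 (by simp))
  intro z hz m m' hmm'
  have step : ∀ m', m ≤ m' → ‖(PhiStarP α m').eval z - (PhiStarP α m).eval z‖ ≤
      ∑ i ∈ Finset.Ico m m', C * q ^ i * M := by
    intro m' hmm'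
    induction m', hmm' using Nat.le_induction with
    | base => simp
    | succ m' hmm' ih =>
      have key : ‖(PhiStarP α (m' + 1)).eval z - (PhiStarP α m').eval z‖ ≤
          C * q ^ m' * M := by
        rw [eval_phiStar_rec]
        have : (PhiStarP α m').eval z - α m' * (z * (PhiP α m').eval z) -
            (PhiStarP α m').eval z = -(α m' * (z * (PhiP α m').eval z)) := by ring
        rw [this, norm_neg, norm_mul, norm_mul]
        calc ‖α m'‖ * (‖z‖ * ‖(PhiP α m').eval z‖)
            ≤ (C * q ^ m') * (1 * M) := by
              refine mul_le_mul (hC m') ?_ (by positivity) ?_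
              · exact mul_le_mul hz (hM m' z hz) (norm_nonneg _) one_pos.le
              · have := (norm_nonneg (α m')).trans (hC m')
                positivity
          _ = C * q ^ m' * M := by ring
      calc ‖(PhiStarP α (m' + 1)).eval z - (PhiStarP α m).eval z‖
          ≤ ‖(PhiStarP α m').eval z - (PhiStarP α m).eval z‖ +
            ‖(PhiStarP α (m' + 1)).eval z - (PhiStarP α m').eval z‖ := by
            have : (PhiStarP α (m' + 1)).eval z - (PhiStarP α m).eval z =
                ((PhiStarP α m').eval z - (PhiStarP α m).eval z) +
                ((PhiStarP α (m' + 1)).eval z - (PhiStarP α m').eval z) := by ring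
            rw [this]; exact norm_add_le _ _
        _ ≤ (∑ i ∈ Finset.Ico m m', C * q ^ i * M) + C * q ^ m' * M := add_le_add ih key
        _ = ∑ i ∈ Finset.Ico m (m' + 1), C * q ^ i * M := by
            rw [Finset.sum_Ico_succ_top hmm']
  refine (step m' hmm').trans ?_
  have hCpos : 0 ≤ C := by
    have h0 := (norm_nonneg (α 0)).trans (hC 0)
    simpa using h0
  calc ∑ i ∈ Finset.Ico m m', C * q ^ i * M = (C * M) * ∑ i ∈ Finset.Ico m m', q ^ i := by
        rw [Finset.mul_sum]; exact Finset.sum_congr rfl fun i _ => by ring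
    _ ≤ (C * M) * (q ^ m * (1 - q)⁻¹) :=
        mul_le_mul_of_nonneg_left (geom_partial_bound hq0 hq1 m m') (by positivity)
    _ = C * M * (1 - q)⁻¹ * q ^ m := by ring

lemma abs4 (A B C D : ℂ) : ‖A + B - C - D‖ ≤
    ‖A‖ + ‖B‖ + ‖C‖ + ‖D‖ := by
  calc ‖A + B - C - D‖ ≤ ‖A + B - C‖ + ‖D‖ :=
        norm_sub_le _ _
    _ ≤ (‖A + B‖ + ‖C‖) + ‖D‖ := by
        have := norm_sub_le (A + B) C
        linarith
    _ ≤ ((‖A‖ + ‖B‖) + ‖C‖) + ‖D‖ := by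
        have := norm_add_le A B
        linarith
    _ = _ := by ring

theorem stmt_8 (α : ℕ → ℂ) (hα : ∀ n, ‖α n‖ < 1)
    (b : ℝ) (hb0 : 0 < b) (hb1 : b < 1)
    (nseq : ℕ → ℕ) (hmono : StrictMono nseq) (hpos : ∀ j, 0 < nseq j)
    (hnz : ∀ j, α (nseq j - 1) ≠ 0)
    (hlimsup : Filter.limsup (fun n : ℕ => ‖α n‖ ^ ((n : ℝ))⁻¹) atTop = b)
    (hliminf : Filter.liminf (fun j : ℕ =>
      ‖α (nseq j)‖ ^ ((nseq j : ℝ))⁻¹) atTop = b)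
    (β : ℕ → ℂ)
    (hβ : ∀ k : ℕ, Tendsto (fun j : ℕ =>
      (starRingEnd ℂ) (α (nseq j - k - 1)) / (starRingEnd ℂ) (α (nseq j - 1)))
      atTop (nhds (β k)))
    (hbd : ∀ ε : ℝ, 0 < ε → ∃ Cε : ℝ, 0 < Cε ∧ ∀ j k : ℕ, 1 ≤ k → k + 1 ≤ nseq j →
      ‖α (nseq j - k - 1)‖ * (b - ε) ^ k ≤ Cε * ‖α (nseq j - 1)‖)
    (S : ℂ → ℂ)
    (hS : ∀ z : ℂ, ‖z‖ < 1 / b →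
      Tendsto (fun n : ℕ => (PhiStarP α n).eval z) atTop (nhds (S z)))
 :
    ∀ ε : ℝ, 0 < ε → ε < b →
      (∀ z : ℂ, ‖z‖ ≤ b - ε →
        Summable (fun k : ℕ => ‖β k * z ^ k‖)) ∧
      TendstoUniformlyOn
        (fun (N : ℕ) (z : ℂ) => ∑ k ∈ Finset.range N, β k * z ^ k)
        (fun z : ℂ => ∑' k : ℕ, β k * z ^ k) atTop {z : ℂ | ‖z‖ ≤ b - ε} ∧
      TendstoUniformlyOn
        (fun (j : ℕ) (z : ℂ) => (PhiP α (nseq j)).eval z / (starRingEnd ℂ) (α (nseq j - 1)))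
        (fun z : ℂ => -S z * ∑' k : ℕ, β k * z ^ k) atTop
        {z : ℂ | ‖z‖ ≤ b - ε} := by
  -- global setup
  set q : ℝ := (1 + b) / 2 with hq_def
  have hqb : b < q := by rw [hq_def]; linarith
  have hq0 : 0 < q := by rw [hq_def]; linarith
  have hq1 : q < 1 := by rw [hq_def]; linarith
  have hone_lt : (1:ℝ) < 1 / b := (one_lt_one_div hb0 hb1)
  -- geometric bound on α
  obtain ⟨C₀, hC₀, hCgeom⟩ : ∃ C₀ : ℝ, 0 < C₀ ∧ ∀ n, ‖α n‖ ≤ C₀ * q ^ n := by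
    have hbdd : IsBoundedUnder (· ≤ ·) atTop (fun n : ℕ => ‖α n‖ ^ ((n:ℝ))⁻¹) := by
      refine isBoundedUnder_of ⟨1, fun n => ?_⟩
      exact Real.rpow_le_one (norm_nonneg _) (hα n).le (by positivity)
    have hev : ∀ᶠ n in atTop, ‖α n‖ ^ ((n:ℝ))⁻¹ < q :=
      eventually_lt_of_limsup_lt (by rw [hlimsup]; exact hqb) hbdd
    obtain ⟨N, hN⟩ := eventually_atTop.1 hev
    refine ⟨(q ^ (max N 1))⁻¹, by positivity, fun n => ?_⟩
    rcases le_or_gt (max N 1) n with hn | hn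
    · have hn1 : n ≠ 0 := by omega
      have h := hN n (le_trans (le_max_left _ _) hn)
      have heq : ‖α n‖ = (‖α n‖ ^ ((n:ℝ))⁻¹) ^ n :=
        (Real.rpow_inv_natCast_pow (norm_nonneg _) hn1).symm
      have hle : ‖α n‖ ≤ q ^ n := by
        rw [heq]
        exact pow_le_pow_left₀ (Real.rpow_nonneg (norm_nonneg _) _) h.le n
      have hone : (1:ℝ) ≤ (q ^ (max N 1))⁻¹ := by
        rw [le_inv_comm₀ one_pos (by positivity)]
        simpa using pow_le_one₀ hq0.le hq1.le
      nlinarith [pow_nonneg hq0.le n]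
    · have h1 : ‖α n‖ ≤ 1 := (hα n).le
      have h2 : q ^ (max N 1) ≤ q ^ n :=
        pow_le_pow_of_le_one hq0.le hq1.le hn.le
      have h3 : (1:ℝ) ≤ (q ^ (max N 1))⁻¹ * q ^ n := by
        rw [← div_eq_inv_mul, le_div_iff₀ (by positivity)]
        simpa using h2
      linarith
  have hsummable : Summable (fun n => ‖α n‖) := by
    refine Summable.of_nonneg_of_le (fun n => norm_nonneg _) hCgeom ?_
    exact (summable_geometric_of_lt_one hq0.le hq1).mul_left C₀
  set M : ℝ := Real.exp (∑' n, ‖α n‖) with hM_def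
  have hM1 : 1 ≤ M := Real.one_le_exp (tsum_nonneg fun n => norm_nonneg _)
  have hM0 : 0 < M := lt_of_lt_of_le one_pos hM1
  have hMb : ∀ n (z : ℂ), ‖z‖ ≤ 1 →
      ‖(PhiP α n).eval z‖ ≤ M ∧ ‖(PhiStarP α n).eval z‖ ≤ M := by
    intro n z hz
    have hp := phi_prod_bound α n z hz
    have hprod : ∏ k ∈ Finset.range n, (1 + ‖α k‖) ≤ M := by
      calc ∏ k ∈ Finset.range n, (1 + ‖α k‖)
          ≤ ∏ k ∈ Finset.range n, Real.exp (‖α k‖) := by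
            refine Finset.prod_le_prod (fun k _ => by positivity) (fun k _ => ?_)
            linarith [Real.add_one_le_exp (‖α k‖)]
        _ = Real.exp (∑ k ∈ Finset.range n, ‖α k‖) := (Real.exp_sum _ _).symm
        _ ≤ M := Real.exp_le_exp.2
            (Summable.sum_le_tsum _ (fun k _ => norm_nonneg _) hsummable)
    exact ⟨hp.1.trans hprod, hp.2.trans hprod⟩
  set D : ℝ := C₀ * M * (1 - q)⁻¹ with hD_def
  have h1q : (0:ℝ) < 1 - q := by linarith
  have hD0 : 0 ≤ D := by positivity
  have hSd : ∀ m (z : ℂ), ‖z‖ ≤ 1 →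
      ‖S z - (PhiStarP α m).eval z‖ ≤ D * q ^ m := by
    intro m z hz
    have hzb : ‖z‖ < 1 / b := lt_of_le_of_lt hz hone_lt
    have htend : Tendsto (fun m' => ‖(PhiStarP α m').eval z - (PhiStarP α m).eval z‖)
        atTop (nhds (‖S z - (PhiStarP α m).eval z‖)) := by
      exact (continuous_norm.tendsto _).comp ((hS z hzb).sub tendsto_const_nhds)
    refine le_of_tendsto htend ?_
    filter_upwards [eventually_ge_atTop m] with m' hm'
    exact star_diff α M C₀ q hq0.le hq1 hCgeom (fun n w hw => (hMb n w hw).1) z hz m m' hm'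
  have hSb : ∀ z : ℂ, ‖z‖ ≤ 1 → ‖S z‖ ≤ M + D := by
    intro z hz
    have h1 := hSd 0 z hz
    have h2 := (hMb 0 z hz).2
    calc ‖S z‖ = ‖(S z - (PhiStarP α 0).eval z) + (PhiStarP α 0).eval z‖ := by
          ring_nf
      _ ≤ ‖S z - (PhiStarP α 0).eval z‖ + ‖(PhiStarP α 0).eval z‖ :=
          norm_add_le _ _
      _ ≤ D * q ^ 0 + M := add_le_add h1 h2
      _ = M + D := by ring
  have hβzero : β 0 = 1 := by
    refine tendsto_nhds_unique (hβ 0) ?_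
    have heq : (fun j : ℕ => (starRingEnd ℂ) (α (nseq j - 0 - 1)) /
        (starRingEnd ℂ) (α (nseq j - 1))) = fun _ => (1:ℂ) := by
      funext j
      rw [Nat.sub_zero]
      exact div_self (by simpa using hnz j)
    rw [heq]
    exact tendsto_const_nhds
  have hnseq_ge : ∀ j, j ≤ nseq j := fun j => hmono.le_apply
  intro ε hε0 hεb
  set r : ℝ := b - ε with hr_def
  set r' : ℝ := b - ε / 2 with hr'_def
  have hr0 : 0 < r := by rw [hr_def]; linarith
  have hr'0 : 0 < r' := by rw [hr'_def]; linarith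
  have hrr' : r < r' := by rw [hr_def, hr'_def]; linarith
  have hr1 : r < 1 := by rw [hr_def]; linarith
  set ρ : ℝ := r / r' with hρ_def
  have hρ0 : 0 < ρ := div_pos hr0 hr'0
  have hρ1 : ρ < 1 := (div_lt_one hr'0).2 hrr'
  have h1ρ : (0:ℝ) < 1 - ρ := by linarith
  obtain ⟨Cε, hCε0, hCεb⟩ := hbd (ε / 2) (by linarith)
  rw [show b - ε / 2 = r' from hr'_def.symm] at hCεb
  -- ratio bound
  have hrat : ∀ j k : ℕ, 1 ≤ k → k + 1 ≤ nseq j →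
      ‖(starRingEnd ℂ) (α (nseq j - k - 1)) / (starRingEnd ℂ) (α (nseq j - 1))‖ ≤ Cε / r' ^ k := by
    intro j k hk hkn
    rw [norm_div, Complex.norm_conj, Complex.norm_conj]
    rw [div_le_div_iff₀ (norm_pos_iff.2 (hnz j)) (by positivity)]
    exact hCεb j k hk hkn
  have hβb : ∀ k : ℕ, 1 ≤ k → ‖β k‖ ≤ Cε / r' ^ k := by
    intro k hk
    have htend : Tendsto (fun j : ℕ => ‖(starRingEnd ℂ) (α (nseq j - k - 1)) / (starRingEnd ℂ) (α (nseq j - 1))‖) atTop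
        (nhds (‖β k‖)) := (continuous_norm.tendsto _).comp (hβ k)
    refine le_of_tendsto htend ?_
    filter_upwards [eventually_ge_atTop (k + 1)] with j hj
    exact hrat j k hk (le_trans hj (hnseq_ge j))
  set C₁ : ℝ := max Cε 1 with hC₁_def
  have hC₁0 : 0 < C₁ := lt_max_of_lt_right one_pos
  have hCεC₁ : Cε ≤ C₁ := le_max_left _ _
  have hβball : ∀ k : ℕ, ‖β k‖ ≤ C₁ / r' ^ k := by
    intro k
    rcases Nat.eq_zero_or_pos k with rfl | hk
    · rw [hβzero, hC₁_def]
      simpa using (le_max_right Cε 1)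
    · exact (hβb k hk).trans (by gcongr)
  have hterm : ∀ z : ℂ, ‖z‖ ≤ r → ∀ k : ℕ,
      ‖β k * z ^ k‖ ≤ C₁ * ρ ^ k := by
    intro z hz k
    rw [norm_mul, norm_pow]
    calc ‖β k‖ * ‖z‖ ^ k ≤ (C₁ / r' ^ k) * r ^ k := by
          refine mul_le_mul (hβball k) (pow_le_pow_left₀ (norm_nonneg _) hz k)
            (by positivity) (by positivity)
      _ = C₁ * ρ ^ k := by rw [hρ_def, div_pow]; ring
  have hgeomsum : Summable (fun k : ℕ => C₁ * ρ ^ k) :=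
    (summable_geometric_of_lt_one hρ0.le hρ1).mul_left C₁
  have hsum1 : ∀ z : ℂ, ‖z‖ ≤ r →
      Summable (fun k : ℕ => ‖β k * z ^ k‖) := by
    intro z hz
    exact Summable.of_nonneg_of_le (fun k => norm_nonneg _) (hterm z hz) hgeomsum
  refine ⟨hsum1, ?_, ?_⟩
  · refine tendstoUniformlyOn_tsum_nat hgeomsum ?_
    intro k z hz
    exact hterm z hz k
  -- part 3
  have hliminfb : IsBoundedUnder (· ≤ ·) atTop
      (fun j : ℕ => ‖α (nseq j)‖ ^ ((nseq j : ℝ))⁻¹) :=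
    isBoundedUnder_of ⟨1, fun j =>
      Real.rpow_le_one (norm_nonneg _) (hα _).le (by positivity)⟩
  have hev2 : ∀ᶠ j in atTop, r' < ‖α (nseq j)‖ ^ ((nseq j : ℝ))⁻¹ :=
    eventually_lt_of_lt_liminf (by rw [hliminf, hr'_def]; linarith)
      (isBoundedUnder_of ⟨0, fun j => Real.rpow_nonneg (norm_nonneg _) _⟩)
  obtain ⟨i, hi⟩ := hev2.exists
  have hαni : r' ^ nseq i ≤ ‖α (nseq i)‖ := by
    have h0 : nseq i ≠ 0 := (hpos i).ne'
    have hp := pow_le_pow_left₀ hr'0.le hi.le (nseq i)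
    rwa [Real.rpow_inv_natCast_pow (norm_nonneg _) h0] at hp
  have hlow : ∀ j : ℕ, i + 2 ≤ j →
      (Cε * r')⁻¹ * r' ^ nseq j ≤ ‖α (nseq j - 1)‖ := by
    intro j hj
    have h1 : nseq i < nseq (i + 1) := hmono (by omega)
    have h2 : nseq (i + 1) < nseq j := hmono (by omega)
    have hge : nseq i + 2 ≤ nseq j := by omega
    have hk1 : 1 ≤ nseq j - 1 - nseq i := by omega
    have hkn : (nseq j - 1 - nseq i) + 1 ≤ nseq j := by omega
    have hb1' := hCεb j (nseq j - 1 - nseq i) hk1 hkn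
    rw [show nseq j - (nseq j - 1 - nseq i) - 1 = nseq i by omega] at hb1'
    have hL : r' ^ (nseq j - 1) ≤ ‖α (nseq i)‖ * r' ^ (nseq j - 1 - nseq i) := by
      calc r' ^ (nseq j - 1) = r' ^ nseq i * r' ^ (nseq j - 1 - nseq i) := by
            rw [← pow_add]; congr 1; omega
        _ ≤ _ := mul_le_mul_of_nonneg_right hαni (by positivity)
    have hL2 : r' ^ nseq j ≤ r' ^ (nseq j - 1) * r' := by
      rw [← pow_succ]
      apply le_of_eq
      congr 1
      omega
    have hchain : r' ^ nseq j ≤ Cε * ‖α (nseq j - 1)‖ * r' :=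
      le_trans (hL2.trans (mul_le_mul_of_nonneg_right hL hr'0.le))
        (mul_le_mul_of_nonneg_right hb1' hr'0.le)
    rw [inv_mul_le_iff₀ (by positivity)]
    calc r' ^ nseq j ≤ Cε * ‖α (nseq j - 1)‖ * r' := hchain
      _ = Cε * r' * ‖α (nseq j - 1)‖ := by ring
  -- the identity
  have hident : ∀ (j : ℕ) (z : ℂ),
      (PhiP α (nseq j)).eval z / (starRingEnd ℂ) (α (nseq j - 1)) =
      z ^ (nseq j) / (starRingEnd ℂ) (α (nseq j - 1)) - ∑ k ∈ Finset.range (nseq j), (starRingEnd ℂ) (α (nseq j - k - 1)) / (starRingEnd ℂ) (α (nseq j - 1)) * (z ^ k * (PhiStarP α (nseq j - k - 1)).eval z) := by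
    intro j z
    have hrev : ∑ k ∈ Finset.range (nseq j),
        (starRingEnd ℂ) (α (nseq j - k - 1)) * (z ^ k * (PhiStarP α (nseq j - k - 1)).eval z)
        = ∑ m ∈ Finset.range (nseq j),
        (starRingEnd ℂ) (α m) * (z ^ (nseq j - 1 - m) * (PhiStarP α m).eval z) := by
      rw [← Finset.sum_range_reflect (fun m =>
        (starRingEnd ℂ) (α m) * (z ^ (nseq j - 1 - m) * (PhiStarP α m).eval z)) (nseq j)]
      refine Finset.sum_congr rfl fun k hk => ?_
      rw [Finset.mem_range] at hk
      rw [show nseq j - 1 - (nseq j - 1 - k) = k by omega,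
        show nseq j - 1 - k = nseq j - k - 1 by omega]
    rw [phi_identity, ← hrev, sub_div, Finset.sum_div]
    congr 1
    refine Finset.sum_congr rfl fun k _ => ?_
    ring
  rw [Metric.tendstoUniformlyOn_iff]
  intro ε₀ hε₀
  set CC : ℝ := (M + D) * (C₁ + Cε) * (1 - ρ)⁻¹ with hCC_def
  have hCC0 : 0 < CC := by positivity
  obtain ⟨K, hK1, hKb⟩ : ∃ K : ℕ, 1 ≤ K ∧ CC * ρ ^ K < ε₀ / 4 := by
    have ht : Tendsto (fun K : ℕ => CC * ρ ^ K) atTop (nhds 0) := by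
      simpa using (tendsto_pow_atTop_nhds_zero_of_lt_one hρ0.le hρ1).const_mul CC
    obtain ⟨K, h1, h2⟩ := ((ht.eventually_lt_const (by positivity : (0:ℝ) < ε₀ / 4)).and
      (eventually_ge_atTop 1)).exists
    exact ⟨K, h2, h1⟩
  have hhead : Tendsto (fun j : ℕ => ∑ k ∈ Finset.range K, (M * ‖(starRingEnd ℂ) (α (nseq j - k - 1)) / (starRingEnd ℂ) (α (nseq j - 1)) - β k‖ + C₁ / r' ^ k * D * q ^ (nseq j - k - 1))) atTop (nhds 0) := by
    rw [show (0:ℝ) = ∑ k ∈ Finset.range K, (0:ℝ) by simp]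
    refine tendsto_finset_sum _ fun k _ => ?_
    have t1 : Tendsto (fun j : ℕ => ‖(starRingEnd ℂ) (α (nseq j - k - 1)) / (starRingEnd ℂ) (α (nseq j - 1)) - β k‖) atTop (nhds 0) := by
      have h₁ := (hβ k).sub_const (β k)
      have h₂ := (continuous_norm.tendsto (β k - β k)).comp h₁
      simpa [Function.comp_def] using h₂
    have t2 : Tendsto (fun j : ℕ => q ^ (nseq j - k - 1)) atTop (nhds 0) := by
      have harg : Tendsto (fun j : ℕ => nseq j - k - 1) atTop atTop := by
        refine tendsto_atTop_mono (fun j => ?_) (tendsto_sub_atTop_nat (k + 1))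
        have := hnseq_ge j
        omega
      exact (tendsto_pow_atTop_nhds_zero_of_lt_one hq0.le hq1).comp harg
    simpa using (t1.const_mul M).add (t2.const_mul (C₁ / r' ^ k * D))
  have hAt : Tendsto (fun j : ℕ => Cε * r' * ρ ^ nseq j) atTop (nhds 0) := by
    have harg : Tendsto nseq atTop atTop := hmono.tendsto_atTop
    simpa using ((tendsto_pow_atTop_nhds_zero_of_lt_one hρ0.le hρ1).comp harg).const_mul (Cε * r')
  filter_upwards [eventually_ge_atTop (i + 2),
    hAt.eventually_lt_const (by positivity : (0:ℝ) < ε₀ / 4),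
    hhead.eventually_lt_const (by positivity : (0:ℝ) < ε₀ / 4),
    eventually_ge_atTop (K + 1)] with j hji hjA hjh hjK
  intro z hz
  replace hz : ‖z‖ ≤ r := hz
  have hz1 : ‖z‖ ≤ 1 := le_trans hz (by rw [hr_def]; linarith)
  have hnK : K + 1 ≤ nseq j := le_trans hjK (hnseq_ge j)
  have hd0 : (starRingEnd ℂ) (α (nseq j - 1)) ≠ 0 := by simpa using hnz j
  have hsummz : Summable (fun k : ℕ => β k * z ^ k) := by
    refine Summable.of_norm ?_
    simpa using hsum1 z hz
  have hsummf : Summable (fun k : ℕ => S z * (β k * z ^ k)) := hsummz.mul_left _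
  have hsplit := Summable.sum_add_tsum_nat_add (f := fun k : ℕ => S z * (β k * z ^ k)) K hsummf
  have hsum_split : ∑ k ∈ Finset.range (nseq j), ((starRingEnd ℂ) (α (nseq j - k - 1)) / (starRingEnd ℂ) (α (nseq j - 1)) * (z ^ k * (PhiStarP α (nseq j - k - 1)).eval z)) =
      (∑ k ∈ Finset.range K, ((starRingEnd ℂ) (α (nseq j - k - 1)) / (starRingEnd ℂ) (α (nseq j - 1)) * (z ^ k * (PhiStarP α (nseq j - k - 1)).eval z))) + ∑ k ∈ Finset.Ico K (nseq j), (starRingEnd ℂ) (α (nseq j - k - 1)) / (starRingEnd ℂ) (α (nseq j - 1)) * (z ^ k * (PhiStarP α (nseq j - k - 1)).eval z) := by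
    rw [Finset.range_eq_Ico, ← Finset.sum_Ico_consecutive _ (Nat.zero_le K)
      (by omega : K ≤ nseq j), ← Finset.range_eq_Ico]
  have key : (-S z * ∑' (k : ℕ), β k * z ^ k) -
      (PhiP α (nseq j)).eval z / (starRingEnd ℂ) (α (nseq j - 1)) =
      (∑ k ∈ Finset.range K, ((starRingEnd ℂ) (α (nseq j - k - 1)) / (starRingEnd ℂ) (α (nseq j - 1)) * (z ^ k * (PhiStarP α (nseq j - k - 1)).eval z) - S z * (β k * z ^ k))) + (∑ k ∈ Finset.Ico K (nseq j), (starRingEnd ℂ) (α (nseq j - k - 1)) / (starRingEnd ℂ) (α (nseq j - 1)) * (z ^ k * (PhiStarP α (nseq j - k - 1)).eval z)) - (∑' (k : ℕ), S z * (β (k + K) * z ^ (k + K))) - (z ^ (nseq j) / (starRingEnd ℂ) (α (nseq j - 1))) := by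
    rw [hident j z, neg_mul, ← tsum_mul_left, ← hsplit, hsum_split, Finset.sum_sub_distrib]
    ring
  -- bound each piece
  have b1 : ‖∑ k ∈ Finset.range K, ((starRingEnd ℂ) (α (nseq j - k - 1)) / (starRingEnd ℂ) (α (nseq j - 1)) * (z ^ k * (PhiStarP α (nseq j - k - 1)).eval z) - S z * (β k * z ^ k))‖ ≤ ∑ k ∈ Finset.range K, (M * ‖(starRingEnd ℂ) (α (nseq j - k - 1)) / (starRingEnd ℂ) (α (nseq j - 1)) - β k‖ + C₁ / r' ^ k * D * q ^ (nseq j - k - 1)) := by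
    refine (norm_sum_le _ _).trans (Finset.sum_le_sum fun k hk => ?_)
    have heq : (starRingEnd ℂ) (α (nseq j - k - 1)) / (starRingEnd ℂ) (α (nseq j - 1)) * (z ^ k * (PhiStarP α (nseq j - k - 1)).eval z) - S z * (β k * z ^ k) =
        z ^ k * ((((starRingEnd ℂ) (α (nseq j - k - 1)) / (starRingEnd ℂ) (α (nseq j - 1))) - β k) * (PhiStarP α (nseq j - k - 1)).eval z
          + β k * ((PhiStarP α (nseq j - k - 1)).eval z - S z)) := by ring
    rw [heq, norm_mul, norm_pow]
    have hzk : ‖z‖ ^ k ≤ 1 := pow_le_one₀ (norm_nonneg _) hz1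
    have hin : ‖(((starRingEnd ℂ) (α (nseq j - k - 1)) / (starRingEnd ℂ) (α (nseq j - 1))) - β k) * (PhiStarP α (nseq j - k - 1)).eval z
        + β k * ((PhiStarP α (nseq j - k - 1)).eval z - S z)‖ ≤
        M * ‖((starRingEnd ℂ) (α (nseq j - k - 1)) / (starRingEnd ℂ) (α (nseq j - 1))) - β k‖ + C₁ / r' ^ k * D * q ^ (nseq j - k - 1) := by
      refine (norm_add_le _ _).trans (add_le_add ?_ ?_)
      · rw [norm_mul]
        calc ‖((starRingEnd ℂ) (α (nseq j - k - 1)) / (starRingEnd ℂ) (α (nseq j - 1))) - β k‖ * ‖(PhiStarP α (nseq j - k - 1)).eval z‖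
            ≤ ‖((starRingEnd ℂ) (α (nseq j - k - 1)) / (starRingEnd ℂ) (α (nseq j - 1))) - β k‖ * M :=
              mul_le_mul_of_nonneg_left (hMb _ z hz1).2 (norm_nonneg _)
          _ = M * ‖((starRingEnd ℂ) (α (nseq j - k - 1)) / (starRingEnd ℂ) (α (nseq j - 1))) - β k‖ := mul_comm _ _
      · rw [norm_mul]
        have h2 : ‖(PhiStarP α (nseq j - k - 1)).eval z - S z‖ ≤
            D * q ^ (nseq j - k - 1) := by
          rw [norm_sub_rev]
          exact hSd (nseq j - k - 1) z hz1
        calc ‖β k‖ * ‖(PhiStarP α (nseq j - k - 1)).eval z - S z‖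
            ≤ (C₁ / r' ^ k) * (D * q ^ (nseq j - k - 1)) :=
              mul_le_mul (hβball k) h2 (norm_nonneg _) (by positivity)
          _ = C₁ / r' ^ k * D * q ^ (nseq j - k - 1) := by ring
    calc ‖z‖ ^ k * ‖_‖ ≤ 1 *
        (M * ‖((starRingEnd ℂ) (α (nseq j - k - 1)) / (starRingEnd ℂ) (α (nseq j - 1))) - β k‖ + C₁ / r' ^ k * D * q ^ (nseq j - k - 1)) :=
          mul_le_mul hzk hin (norm_nonneg _) one_pos.le
      _ = _ := one_mul _
  have b2 : ‖∑ k ∈ Finset.Ico K (nseq j), (starRingEnd ℂ) (α (nseq j - k - 1)) / (starRingEnd ℂ) (α (nseq j - 1)) * (z ^ k * (PhiStarP α (nseq j - k - 1)).eval z)‖ ≤ CC * ρ ^ K := by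
    refine (norm_sum_le _ _).trans ?_
    have hterm2 : ∀ k ∈ Finset.Ico K (nseq j),
        ‖(starRingEnd ℂ) (α (nseq j - k - 1)) / (starRingEnd ℂ) (α (nseq j - 1)) * (z ^ k * (PhiStarP α (nseq j - k - 1)).eval z)‖ ≤ M * Cε * ρ ^ k := by
      intro k hk
      rw [Finset.mem_Ico] at hk
      have hratk := hrat j k (le_trans hK1 hk.1) (by omega)
      rw [norm_mul, norm_mul, norm_pow]
      calc ‖(starRingEnd ℂ) (α (nseq j - k - 1)) / (starRingEnd ℂ) (α (nseq j - 1))‖ * (‖z‖ ^ k * ‖(PhiStarP α (nseq j - k - 1)).eval z‖)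
          ≤ (Cε / r' ^ k) * (r ^ k * M) := by
            refine mul_le_mul hratk ?_ (by positivity) (by positivity)
            exact mul_le_mul (pow_le_pow_left₀ (norm_nonneg _) hz k)
              (hMb _ z hz1).2 (norm_nonneg _) (by positivity)
        _ = M * Cε * ρ ^ k := by rw [hρ_def, div_pow]; ring
    calc ∑ k ∈ Finset.Ico K (nseq j), ‖(starRingEnd ℂ) (α (nseq j - k - 1)) / (starRingEnd ℂ) (α (nseq j - 1)) * (z ^ k * (PhiStarP α (nseq j - k - 1)).eval z)‖
        ≤ ∑ k ∈ Finset.Ico K (nseq j), M * Cε * ρ ^ k := Finset.sum_le_sum hterm2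
      _ = (M * Cε) * ∑ k ∈ Finset.Ico K (nseq j), ρ ^ k := by
          rw [Finset.mul_sum]
      _ ≤ (M * Cε) * (ρ ^ K * (1 - ρ)⁻¹) :=
          mul_le_mul_of_nonneg_left (geom_partial_bound hρ0.le hρ1 K (nseq j)) (by positivity)
      _ = M * Cε * (1 - ρ)⁻¹ * ρ ^ K := by ring
      _ ≤ (M + D) * (C₁ + Cε) * (1 - ρ)⁻¹ * ρ ^ K := by
          gcongr
          · linarith
          · linarith
      _ = CC * ρ ^ K := by rw [hCC_def]
  have b3 : ‖∑' (k : ℕ), S z * (β (k + K) * z ^ (k + K))‖ ≤ CC * ρ ^ K := by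
    have hbnd : ∀ k : ℕ, ‖S z * (β (k + K) * z ^ (k + K))‖ ≤
        (M + D) * C₁ * ρ ^ K * ρ ^ k := by
      intro k
      rw [norm_mul]
      calc ‖S z‖ * ‖β (k + K) * z ^ (k + K)‖
          ≤ (M + D) * (C₁ * ρ ^ (k + K)) :=
            mul_le_mul (hSb z hz1) (hterm z hz (k + K)) (norm_nonneg _)
              (by linarith)
        _ = (M + D) * C₁ * ρ ^ K * ρ ^ k := by rw [pow_add]; ring
    have hsummb : Summable (fun k : ℕ => (M + D) * C₁ * ρ ^ K * ρ ^ k) :=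
      (summable_geometric_of_lt_one hρ0.le hρ1).mul_left _
    have hsn : Summable (fun k : ℕ => ‖S z * (β (k + K) * z ^ (k + K))‖) :=
      Summable.of_nonneg_of_le (fun k => norm_nonneg _) hbnd hsummb
    calc ‖∑' (k : ℕ), S z * (β (k + K) * z ^ (k + K))‖ ≤ ∑' (k : ℕ), ‖S z * (β (k + K) * z ^ (k + K))‖ := by
          simpa using
            norm_tsum_le_tsum_norm (f := fun k : ℕ => S z * (β (k + K) * z ^ (k + K)))
              (by simpa using hsn)
      _ ≤ ∑' (k : ℕ), (M + D) * C₁ * ρ ^ K * ρ ^ k := Summable.tsum_le_tsum hbnd hsn hsummb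
      _ = (M + D) * C₁ * ρ ^ K * (1 - ρ)⁻¹ := by
          rw [tsum_mul_left, tsum_geometric_of_lt_one hρ0.le hρ1]
      _ = (M + D) * C₁ * (1 - ρ)⁻¹ * ρ ^ K := by ring
      _ ≤ (M + D) * (C₁ + Cε) * (1 - ρ)⁻¹ * ρ ^ K := by
          gcongr
          linarith
      _ = CC * ρ ^ K := by rw [hCC_def]
  have b4 : ‖z ^ (nseq j) / (starRingEnd ℂ) (α (nseq j - 1))‖ < ε₀ / 4 := by
    rw [norm_div, norm_pow, Complex.norm_conj]
    have hdlow := hlow j hji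
    have h2 : ‖z‖ ^ nseq j / ‖α (nseq j - 1)‖ ≤
        r ^ nseq j / ((Cε * r')⁻¹ * r' ^ nseq j) :=
      div_le_div₀ (by positivity) (pow_le_pow_left₀ (norm_nonneg _) hz (nseq j))
        (by positivity) hdlow
    have h3 : r ^ nseq j / ((Cε * r')⁻¹ * r' ^ nseq j) = Cε * r' * ρ ^ nseq j := by
      rw [hρ_def, div_pow]
      field_simp
    calc ‖z‖ ^ nseq j / ‖α (nseq j - 1)‖
        ≤ Cε * r' * ρ ^ nseq j := by rw [← h3]; exact h2
      _ < ε₀ / 4 := hjA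
  rw [Complex.dist_eq, key]
  refine lt_of_le_of_lt (abs4 _ _ _ _) ?_
  linarith [b1, b2, b3, b4, hjh, hKb]
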